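/- Let q ≥ 2, a ≥ 1, let C_a ⊆ … ⊆ C_1 ⊊ ℤ_qⁿ be nested q-ary linear codes (C_1 a proper subgroup, so C_1⊥ ≠ {0}), with integers 0 ≤ r_1 ≤ … ≤ r_a and h_1, …, h_{r_a} ∈ ℤ_qⁿ such that C_ℓ⊥ = ⟨h_1,…,h_{r_ℓ}⟩ for each ℓ, and let Λ_{D'} be the associated Construction D' lattice. Assume the dual chain C_1⊥ ⊆ C_2⊥ ⊆ … ⊆ C_a⊥ is closed under zero-one addition. Then for every real 1 ≤ P < ∞, the L_P minimum distance of the dual lattice of Λ_{D'} satisfies d_P(Λ_{D'}*) = min{1, q^{−1}d_P(C_a⊥), q^{−2}d_P(C_{a−1}⊥), …, q^{−a}d_P(C_1⊥)}, where d_P(C_ℓ⊥) is the P-Lee minimum distance of C_ℓ⊥. -/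

import Mathlib

/-- The `P`-Lee minimum distance of a code `C ⊆ (ℤ/q)ⁿ`. -/
noncomputable def codeDistP (q n : ℕ) (P : ℝ) (C : Set (Fin n → ZMod q)) : ℝ :=
  sInf {d : ℝ | ∃ x ∈ C, ∃ y ∈ C, x ≠ y ∧
    d = (∑ i, ((min ((x i - y i).val) (q - (x i - y i).val) : ℕ) : ℝ) ^ P) ^ (1 / P)}

/-- The `L_P` minimum distance of a subset of `ℝⁿ`. -/
noncomputable def lpDistR (n : ℕ) (P : ℝ) (S : Set (Fin n → ℝ)) : ℝ :=
  sInf {d : ℝ | ∃ x ∈ S, ∃ y ∈ S, x ≠ y ∧ d = (∑ i, |x i - y i| ^ P) ^ (1 / P)}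

/-- The dual lattice of a subset of `ℝⁿ`. -/
def dualLattice (n : ℕ) (L : Set (Fin n → ℝ)) : Set (Fin n → ℝ) :=
  {y | ∀ x ∈ L, ∃ k : ℤ, ∑ i, y i * x i = (k : ℝ)}

/-- The dual code of a subset of `(ℤ/q)ⁿ`. -/
def dualCode (q n : ℕ) (C : Set (Fin n → ZMod q)) : Set (Fin n → ZMod q) :=
  {x | ∀ y ∈ C, ∑ i, x i * y i = 0}

/-- The zero-one addition on `ℤ_qⁿ`. -/
def zeroOne (q n : ℕ) (x y : Fin n → ZMod q) : Fin n → ZMod q :=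
  fun i => if (x i).val + (y i).val < q then 0 else 1

/-- The Construction D' lattice: `x ∈ ℤⁿ` with `x · σ(h j) ≡ 0 (mod q^(i+1))`
for all `0 ≤ i < a` and `r (a-i-1) < j ≤ r (a-i)`. -/
def lambdaDprime (q a n : ℕ) (r : ℕ → ℕ) (h : ℕ → Fin n → ZMod q) :
    Set (Fin n → ℤ) :=
  {x | ∀ i < a, ∀ j, r (a - i - 1) < j → j ≤ r (a - i) →
    ((q : ℤ) ^ (i + 1)) ∣ ∑ k, x k * (((h j) k).val : ℤ)}


namespace LDP

lemma self_natCast_val {q : ℕ} (hq : 2 ≤ q) (u : ZMod q) : ((u.val : ℕ) : ZMod q) = u := by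
  haveI : NeZero q := ⟨by omega⟩
  rw [ZMod.natCast_val, ZMod.cast_id]

lemma self_natCast_val' {N : ℕ} [NeZero N] (u : ZMod N) : ((u.val : ℕ) : ZMod N) = u := by
  rw [ZMod.natCast_val, ZMod.cast_id]

/-- carry identity for `ZMod.val` of a sum, in `ℤ`. -/
lemma val_add_int {q : ℕ} (hq : 2 ≤ q) (u v : ZMod q) :
    (((u + v).val : ℤ)) = (u.val : ℤ) + v.val - q * (if u.val + v.val < q then 0 else 1) := by
  haveI : NeZero q := ⟨by omega⟩
  have h1 : (u + v).val = (u.val + v.val) % q := by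
    rw [ZMod.val_add]
  have hu : u.val < q := ZMod.val_lt u
  have hv : v.val < q := ZMod.val_lt v
  by_cases hlt : u.val + v.val < q
  · simp only [hlt, if_true]
    rw [h1, Nat.mod_eq_of_lt hlt]
    push_cast; ring
  · simp only [hlt, if_false]
    have h2 : (u.val + v.val) % q = u.val + v.val - q := by
      rw [Nat.mod_eq_sub_mod (by omega), Nat.mod_eq_of_lt (by omega)]
    rw [h1, h2]
    push_cast [Nat.cast_sub (by omega : q ≤ u.val + v.val)]
    ring

lemma zeroOne_val {q n : ℕ} (hq : 2 ≤ q) (x y : Fin n → ZMod q) (i : Fin n) :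
    (((zeroOne q n x y i).val : ℤ)) = (if (x i).val + (y i).val < q then 0 else 1) := by
  haveI : Fact (1 < q) := ⟨by omega⟩
  unfold zeroOne
  by_cases hlt : (x i).val + (y i).val < q
  · simp [hlt]
  · simp [hlt, ZMod.val_one]

/-- main carry identity coordinatewise. -/
lemma sigma_add {q n : ℕ} (hq : 2 ≤ q) (x y : Fin n → ZMod q) (i : Fin n) :
    (((x i + y i).val : ℤ)) = (x i).val + (y i).val - q * ((zeroOne q n x y i).val : ℤ) := by
  rw [val_add_int hq, zeroOne_val hq]

lemma lee_le_abs {q : ℕ} (hq : 2 ≤ q) (u : ZMod q) (m : ℤ) (hm : (m : ZMod q) = u) :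
    ((min u.val (q - u.val) : ℕ) : ℤ) ≤ |m| := by
  haveI : NeZero q := ⟨by omega⟩
  have hdvd : (q : ℤ) ∣ m - (u.val : ℤ) := by
    rw [← ZMod.intCast_zmod_eq_zero_iff_dvd]
    push_cast
    rw [hm, self_natCast_val hq, sub_self]
  obtain ⟨s, hs⟩ := hdvd
  have hu : (u.val : ℤ) < q := by exact_mod_cast ZMod.val_lt u
  have hu0 : (0 : ℤ) ≤ (u.val : ℤ) := by positivity
  have hmin1 : ((min u.val (q - u.val) : ℕ) : ℤ) ≤ (u.val : ℤ) := by
    exact_mod_cast Nat.cast_le.mpr (Nat.min_le_left _ _)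
  have hmin2 : ((min u.val (q - u.val) : ℕ) : ℤ) ≤ (q : ℤ) - u.val := by
    have := Nat.min_le_right u.val (q - u.val)
    have h1 : ((q - u.val : ℕ) : ℤ) = (q : ℤ) - u.val := by
      push_cast [Nat.cast_sub (le_of_lt (ZMod.val_lt u))]; ring
    calc ((min u.val (q - u.val) : ℕ) : ℤ) ≤ ((q - u.val : ℕ) : ℤ) := by exact_mod_cast this
    _ = (q : ℤ) - u.val := h1
  rcases le_or_gt 0 s with hs0 | hs0
  · have hm0 : (u.val : ℤ) ≤ m := by nlinarith
    calc ((min u.val (q - u.val) : ℕ) : ℤ) ≤ (u.val : ℤ) := hmin1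
    _ ≤ m := hm0
    _ ≤ |m| := le_abs_self m
  · have hs1 : s ≤ -1 := by omega
    have hqs : (q : ℤ) * s ≤ (q : ℤ) * (-1) := by
      apply mul_le_mul_of_nonneg_left hs1 (by positivity)
    have hm0 : m ≤ (u.val : ℤ) - q := by nlinarith
    have : |m| = -m := abs_of_nonpos (by omega)
    rw [this]
    omega

lemma baer_zmod (N : ℕ) [NeZero N] : Module.Baer (ZMod N) (ZMod N) := by
  haveI : IsPrincipalIdealRing (ZMod N) :=
    IsPrincipalIdealRing.of_surjective (Int.castRingHom (ZMod N)) ZMod.intCast_surjective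
  intro I g
  have hNpos : 0 < N := Nat.pos_of_ne_zero (NeZero.ne N)
  set gen : ZMod N := Submodule.IsPrincipal.generator I with hgen
  have hgenmem : gen ∈ I := Submodule.IsPrincipal.generator_mem I
  have hspan : Ideal.span {gen} = I := Submodule.IsPrincipal.span_singleton_generator I
  set y : ZMod N := g ⟨gen, hgenmem⟩ with hy
  set gv : ℕ := gen.val with hgv
  set d : ℕ := Nat.gcd gv N with hd
  have hdN : d ∣ N := Nat.gcd_dvd_right gv N
  have hdgv : d ∣ gv := Nat.gcd_dvd_left gv N
  have hd0 : 0 < d := Nat.gcd_pos_of_pos_right gv hNpos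
  -- (N/d) * gen = 0
  have hkill : ((N / d : ℕ) : ZMod N) * gen = 0 := by
    have : ((N / d : ℕ) : ZMod N) * gen = (((N / d) * gv : ℕ) : ZMod N) := by
      push_cast [self_natCast_val' gen]; rw [hgv, self_natCast_val' gen]
    rw [this, ZMod.natCast_eq_zero_iff]
    obtain ⟨s, hs⟩ := hdgv
    refine ⟨s, ?_⟩
    rw [hs, ← mul_assoc, Nat.div_mul_cancel hdN]
  -- (N/d) * y = 0
  have hykill : ((N / d : ℕ) : ZMod N) * y = 0 := by
    have h1 : ((N / d : ℕ) : ZMod N) • (⟨gen, hgenmem⟩ : I) = (0 : I) := by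
      apply Subtype.ext
      simp only [Submodule.coe_smul, smul_eq_mul, Submodule.coe_zero]
      exact hkill
    calc ((N / d : ℕ) : ZMod N) * y = ((N / d : ℕ) : ZMod N) • y := rfl
    _ = g (((N / d : ℕ) : ZMod N) • ⟨gen, hgenmem⟩) := by rw [map_smul]
    _ = g 0 := by rw [h1]
    _ = 0 := map_zero g
  -- d ∣ y.val
  have hdyval : d ∣ y.val := by
    have h1 : (((N / d) * y.val : ℕ) : ZMod N) = 0 := by
      push_cast [self_natCast_val' y]
      exact hykill
    rw [ZMod.natCast_eq_zero_iff] at h1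
    have h0 : 0 < N / d := Nat.div_pos (Nat.le_of_dvd hNpos hdN) hd0
    have hNd : N = (N / d) * d := (Nat.div_mul_cancel hdN).symm
    have h2 : (N / d) * d ∣ (N / d) * y.val := by rw [← hNd]; exact h1
    exact (Nat.mul_dvd_mul_iff_left h0).mp h2
  -- gen ∣ (d : ZMod N)
  have hgend : ∃ e : ZMod N, (d : ZMod N) = gen * e := by
    have hb := Nat.gcd_eq_gcd_ab gv N
    refine ⟨((Nat.gcdA gv N : ℤ) : ZMod N), ?_⟩
    have : ((d : ℤ) : ZMod N) = ((gv * Nat.gcdA gv N + N * Nat.gcdB gv N : ℤ) : ZMod N) := by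
      exact_mod_cast congrArg (fun z : ℤ => ((z : ZMod N))) hb
    push_cast at this
    rw [ZMod.natCast_self, self_natCast_val' gen] at this
    simpa using this
  obtain ⟨e, he⟩ := hgend
  obtain ⟨s, hsy⟩ := hdyval
  have hyfact : y = gen * (e * (s : ZMod N)) := by
    have : y = ((d * s : ℕ) : ZMod N) := by rw [← hsy, self_natCast_val' y]
    rw [this]; push_cast [he]; ring
  refine ⟨LinearMap.toSpanSingleton (ZMod N) (ZMod N) (e * (s : ZMod N)), ?_⟩
  intro x hx
  rw [← hspan] at hx
  obtain ⟨t, ht⟩ := Ideal.mem_span_singleton'.mp hx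
  have hxI : x ∈ I := ‹x ∈ I›
  have hsub : (⟨x, hxI⟩ : I) = t • ⟨gen, hgenmem⟩ := by
    apply Subtype.ext; simp [← ht, smul_eq_mul]
  calc LinearMap.toSpanSingleton (ZMod N) (ZMod N) (e * (s : ZMod N)) x
      = x * (e * (s : ZMod N)) := by
        simp [LinearMap.toSpanSingleton_apply, smul_eq_mul]
  _ = t * y := by rw [← ht, hyfact]; ring
  _ = g ⟨x, hxI⟩ := by rw [hsub, map_smul]; simp [smul_eq_mul]; rfl
  _ = g ⟨x, ‹x ∈ I›⟩ := rfl

/-- Separation: if `w ∉ K` then some vector annihilating `K` pairs nontrivially with `w`. -/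
lemma sep {N n : ℕ} [NeZero N] (K : Submodule (ZMod N) (Fin n → ZMod N))
    (w : Fin n → ZMod N) (hw : w ∉ K) :
    ∃ v : Fin n → ZMod N, (∀ g ∈ K, ∑ k, v k * g k = 0) ∧ ∑ k, v k * w k ≠ 0 := by
  have hNpos : 0 < N := Nat.pos_of_ne_zero (NeZero.ne N)
  set Q := (Fin n → ZMod N) ⧸ K with hQ
  set wb : Q := Submodule.Quotient.mk w with hwb
  have hwb0 : wb ≠ 0 := by
    rw [hwb, Ne, Submodule.Quotient.mk_eq_zero]
    exact hw
  have hNsmul : (N : ℕ) • wb = 0 := by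
    rw [← Nat.cast_smul_eq_nsmul (ZMod N), ZMod.natCast_self, zero_smul]
  set d : ℕ := addOrderOf wb with hdd
  have hdN : d ∣ N := addOrderOf_dvd_of_nsmul_eq_zero hNsmul
  have hd1 : d ≠ 1 := by
    intro h1
    rw [hdd, AddMonoid.addOrderOf_eq_one_iff] at h1
    exact hwb0 h1
  have hd0 : d ≠ 0 := by
    intro h0
    rw [h0] at hdN
    exact NeZero.ne N (Nat.eq_zero_of_zero_dvd hdN)
  have hd2 : 2 ≤ d := by omega
  set y : ZMod N := ((N / d : ℕ) : ZMod N) with hy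
  have hy0 : y ≠ 0 := by
    rw [hy, Ne, ZMod.natCast_eq_zero_iff]
    intro hdvd
    have h1 : 0 < N / d := Nat.div_pos (Nat.le_of_dvd hNpos hdN) (by omega)
    have h2 : N / d < N := Nat.div_lt_self hNpos hd2
    have := Nat.le_of_dvd h1 hdvd
    omega
  set φ : ZMod N →ₗ[ZMod N] Q := LinearMap.toSpanSingleton (ZMod N) Q wb with hφ
  set ψ : ZMod N →ₗ[ZMod N] ZMod N := LinearMap.toSpanSingleton (ZMod N) (ZMod N) y with hψ
  have hker : LinearMap.ker φ ≤ LinearMap.ker ψ := by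
    intro c hc
    rw [LinearMap.mem_ker] at hc ⊢
    have hc' : c • wb = 0 := hc
    have hcv : (c.val : ℕ) • wb = 0 := by
      rw [← Nat.cast_smul_eq_nsmul (ZMod N), self_natCast_val' c]
      exact hc'
    have hdc : d ∣ c.val := addOrderOf_dvd_iff_nsmul_eq_zero.mpr hcv
    obtain ⟨s, hs⟩ := hdc
    show c • y = 0
    have : c • y = ((c.val * (N / d) : ℕ) : ZMod N) := by
      rw [smul_eq_mul]
      push_cast [self_natCast_val' c, self_natCast_val' y]
      rw [hy]
    rw [this, ZMod.natCast_eq_zero_iff, hs]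
    refine ⟨s, ?_⟩
    rw [mul_comm d s, mul_assoc, Nat.mul_div_cancel' hdN, mul_comm]
  set f1 : (ZMod N ⧸ LinearMap.ker φ) →ₗ[ZMod N] ZMod N := Submodule.liftQ _ ψ hker with hf1
  set e := φ.quotKerEquivRange with he
  set g0 : (LinearMap.range φ) →ₗ[ZMod N] ZMod N := f1 ∘ₗ (e.symm : _ →ₗ[ZMod N] _) with hg0
  obtain ⟨G, hG⟩ := (baer_zmod N).extension_property (LinearMap.range φ).subtype
    (Submodule.injective_subtype _) g0
  set F : (Fin n → ZMod N) →ₗ[ZMod N] ZMod N := G ∘ₗ K.mkQ with hF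
  set v : Fin n → ZMod N := fun k => F (Pi.single k 1) with hv
  have hrep : ∀ x : Fin n → ZMod N, F x = ∑ k, x k * v k := by
    intro x
    have hx : x = ∑ k, Pi.single k (x k) := (Finset.univ_sum_single x).symm
    conv_lhs => rw [hx]
    rw [map_sum]
    apply Finset.sum_congr rfl
    intro k _
    have h1 : Pi.single k (x k) = x k • (Pi.single k (1 : ZMod N) : Fin n → ZMod N) := by
      rw [← Pi.single_smul, smul_eq_mul, mul_one]
    rw [h1, map_smul, smul_eq_mul]
  have h0 : φ 1 = wb := by
    rw [hφ, LinearMap.toSpanSingleton_apply, one_smul]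
  have hmem : wb ∈ LinearMap.range φ := h0 ▸ LinearMap.mem_range_self φ 1
  have hGwb : G wb = y := by
    have s1 : G wb = g0 ⟨wb, hmem⟩ := DFunLike.congr_fun hG ⟨wb, hmem⟩
    have s2 : g0 ⟨wb, hmem⟩ = f1 (e.symm ⟨wb, hmem⟩) := rfl
    have s3 : (⟨wb, hmem⟩ : LinearMap.range φ) = ⟨φ 1, LinearMap.mem_range_self φ 1⟩ :=
      Subtype.ext h0.symm
    have s4 : e.symm ⟨φ 1, LinearMap.mem_range_self φ 1⟩ = (LinearMap.ker φ).mkQ 1 :=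
      LinearMap.quotKerEquivRange_symm_apply_image φ 1 (LinearMap.mem_range_self φ 1)
    have s5 : f1 ((LinearMap.ker φ).mkQ 1) = ψ 1 := by
      rw [Submodule.mkQ_apply, hf1, Submodule.liftQ_apply]
    have s6 : ψ 1 = y := by
      rw [hψ, LinearMap.toSpanSingleton_apply, one_smul]
    rw [s1, s2, s3, s4, s5, s6]
  refine ⟨v, ?_, ?_⟩
  · intro g hg
    have hFg : F g = 0 := by
      rw [hF]
      simp only [LinearMap.comp_apply]
      rw [Submodule.mkQ_apply, (Submodule.Quotient.mk_eq_zero K).mpr hg, map_zero]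
    have : ∑ k, v k * g k = F g := by
      rw [hrep g]
      apply Finset.sum_congr rfl
      intro k _
      ring
    rw [this, hFg]
  · have hFw : F w = y := by
      rw [hF]
      simp only [LinearMap.comp_apply, Submodule.mkQ_apply]
      exact hGwb
    have : ∑ k, v k * w k = F w := by
      rw [hrep w]
      apply Finset.sum_congr rfl
      intro k _
      ring
    rw [this, hFw]
    exact hy0

/-- Generic "Construction D of the dual chain" normal forms with `m` levels. -/
def Gam (q n : ℕ) (D : ℕ → Set (Fin n → ZMod q)) (m : ℕ) (v : Fin n → ℝ) : Prop :=
  ∃ z : Fin n → ℤ, ∃ c : ℕ → Fin n → ZMod q, (∀ k, k < m → c k ∈ D k) ∧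
    ∀ idx, v idx = (z idx : ℝ) +
      ∑ k ∈ Finset.range m, ((q : ℝ) ^ (k + 1))⁻¹ * ((c k idx).val : ℝ)

variable {q n a : ℕ} {D : ℕ → Set (Fin n → ZMod q)}

lemma gam_ext {m : ℕ} {v w : Fin n → ℝ} (hv : Gam q n D m v) (hvw : ∀ idx, v idx = w idx) :
    Gam q n D m w := by
  obtain ⟨z, c, hc, hrep⟩ := hv
  exact ⟨z, c, hc, fun idx => (hvw idx).symm.trans (hrep idx)⟩

lemma gam_of_int (z : Fin n → ℤ) : Gam q n D 0 (fun idx => (z idx : ℝ)) :=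
  ⟨z, fun _ => 0, fun k hk => absurd hk (Nat.not_lt_zero k), fun idx => by simp⟩

lemma gam_mono (hq : 2 ≤ q) (hzero : ∀ k, (0 : Fin n → ZMod q) ∈ D k) {m m' : ℕ} (hm : m ≤ m')
    {v : Fin n → ℝ} (hv : Gam q n D m v) : Gam q n D m' v := by
  haveI : NeZero q := ⟨by omega⟩
  classical
  obtain ⟨z, c, hc, hrep⟩ := hv
  set c' : ℕ → Fin n → ZMod q := fun k => if k < m then c k else 0 with hc'def
  refine ⟨z, c', ?_, ?_⟩
  · intro k hk
    by_cases hkm : k < m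
    · rw [hc'def]; simpa [if_pos hkm] using hc k hkm
    · rw [hc'def]; simpa [if_neg hkm] using hzero k
  · intro idx
    rw [hrep idx]
    congr 1
    have hagree : ∀ k ∈ Finset.range m, ((q : ℝ) ^ (k + 1))⁻¹ * ((c k idx).val : ℝ)
        = ((q : ℝ) ^ (k + 1))⁻¹ * ((c' k idx).val : ℝ) := by
      intro k hk
      rw [Finset.mem_range] at hk
      rw [hc'def]
      simp only [if_pos hk]
    have hvanish : ∀ k ∈ Finset.range m', k ∉ Finset.range m →
        ((q : ℝ) ^ (k + 1))⁻¹ * ((c' k idx).val : ℝ) = 0 := by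
      intro k _ hk
      rw [Finset.mem_range, not_lt] at hk
      rw [hc'def]
      simp only [if_neg (Nat.not_lt.mpr hk), Pi.zero_apply, ZMod.val_zero, Nat.cast_zero,
        mul_zero]
    calc ∑ k ∈ Finset.range m, ((q : ℝ) ^ (k + 1))⁻¹ * ((c k idx).val : ℝ)
        = ∑ k ∈ Finset.range m, ((q : ℝ) ^ (k + 1))⁻¹ * ((c' k idx).val : ℝ) :=
          Finset.sum_congr rfl hagree
      _ = ∑ k ∈ Finset.range m', ((q : ℝ) ^ (k + 1))⁻¹ * ((c' k idx).val : ℝ) :=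
          Finset.sum_subset (Finset.range_subset_range.mpr hm) hvanish

lemma gam_append (hq : 2 ≤ q) {m : ℕ} {v : Fin n → ℝ} (hv : Gam q n D m v)
    {cm : Fin n → ZMod q} (hcm : cm ∈ D m) :
    Gam q n D (m + 1) (fun idx => v idx + ((q : ℝ) ^ (m + 1))⁻¹ * ((cm idx).val : ℝ)) := by
  classical
  obtain ⟨z, c, hc, hrep⟩ := hv
  refine ⟨z, Function.update c m cm, ?_, ?_⟩
  · intro k hk
    by_cases hkm : k = m
    · subst hkm; rw [Function.update_self]; exact hcm
    · rw [Function.update_of_ne hkm]; exact hc k (by omega)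
  · intro idx
    show v idx + ((q : ℝ) ^ (m + 1))⁻¹ * ((cm idx).val : ℝ) = _
    rw [Finset.sum_range_succ, Function.update_self, hrep idx]
    have hagree : ∀ k ∈ Finset.range m,
        ((q : ℝ) ^ (k + 1))⁻¹ * (((Function.update c m cm) k idx).val : ℝ)
          = ((q : ℝ) ^ (k + 1))⁻¹ * ((c k idx).val : ℝ) := by
      intro k hk
      rw [Finset.mem_range] at hk
      rw [Function.update_of_ne (Nat.ne_of_lt hk)]
    rw [Finset.sum_congr rfl hagree]
    ring

lemma gam_zero_fun (hq : 2 ≤ q) (hzero : ∀ k, (0 : Fin n → ZMod q) ∈ D k) (m : ℕ) :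
    Gam q n D m (fun _ => (0 : ℝ)) := by
  apply gam_mono hq hzero (Nat.zero_le m)
  exact gam_ext (gam_of_int (fun _ => 0)) (fun idx => by simp)

lemma gam_single_level (hq : 2 ≤ q) (hzero : ∀ k, (0 : Fin n → ZMod q) ∈ D k)
    {m k : ℕ} (hkm : k < m) {e : Fin n → ZMod q} (he : e ∈ D k) :
    Gam q n D m (fun idx => ((q : ℝ) ^ (k + 1))⁻¹ * ((e idx).val : ℝ)) := by
  apply gam_mono hq hzero (show k + 1 ≤ m by omega)
  apply gam_ext (gam_append hq (gam_zero_fun hq hzero k) he)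
  intro idx
  simp

lemma gam_add (hq : 2 ≤ q) (hzero : ∀ k, (0 : Fin n → ZMod q) ∈ D k)
    (hadd : ∀ k, k < a → ∀ x ∈ D k, ∀ y ∈ D k, x + y ∈ D k)
    (hcarry : ∀ k, 1 ≤ k → k < a → ∀ x ∈ D k, ∀ y ∈ D k, zeroOne q n x y ∈ D (k - 1)) :
    ∀ m, m ≤ a → ∀ v w : Fin n → ℝ, Gam q n D m v → Gam q n D m w →
      Gam q n D m (fun idx => v idx + w idx) := by
  have hq0 : (q : ℝ) ≠ 0 := by positivity
  intro m
  induction m with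
  | zero =>
    intro _ v w hv hw
    obtain ⟨z, c, hc, hrep⟩ := hv
    obtain ⟨z', c', hc', hrep'⟩ := hw
    refine ⟨fun idx => z idx + z' idx, fun _ => 0, fun k hk => absurd hk (Nat.not_lt_zero k), ?_⟩
    intro idx
    simp only [Finset.range_zero, Finset.sum_empty, add_zero] at hrep hrep' ⊢
    rw [hrep idx, hrep' idx]
    push_cast; ring
  | succ m IH =>
    intro hma v w hv hw
    obtain ⟨z, c, hc, hrep⟩ := hv
    obtain ⟨z', c', hc', hrep'⟩ := hw
    set cm := c m with hcmdef
    set cm' := c' m with hcm'def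
    have hcmD : cm ∈ D m := hc m (by omega)
    have hcm'D : cm' ∈ D m := hc' m (by omega)
    set e := zeroOne q n cm cm' with hedef
    -- peeled parts
    set v' : Fin n → ℝ := fun idx => (z idx : ℝ) +
      ∑ k ∈ Finset.range m, ((q : ℝ) ^ (k + 1))⁻¹ * ((c k idx).val : ℝ) with hv'def
    set w' : Fin n → ℝ := fun idx => (z' idx : ℝ) +
      ∑ k ∈ Finset.range m, ((q : ℝ) ^ (k + 1))⁻¹ * ((c' k idx).val : ℝ) with hw'def
    have hv' : Gam q n D m v' := ⟨z, c, fun k hk => hc k (by omega), fun idx => rfl⟩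
    have hw' : Gam q n D m w' := ⟨z', c', fun k hk => hc' k (by omega), fun idx => rfl⟩
    set u : Fin n → ℝ := fun idx => ((q : ℝ) ^ (m + 1))⁻¹ * ((q : ℝ) * ((e idx).val : ℝ))
      with hudef
    have hu : Gam q n D m u := by
      have hkey : ∀ idx, u idx = ((q : ℝ) ^ m)⁻¹ * ((e idx).val : ℝ) := by
        intro idx
        rw [hudef]
        field_simp
        ring
      by_cases hm0 : m = 0
      · subst hm0
        apply gam_ext (gam_of_int (fun idx => ((e idx).val : ℤ)))
        intro idx
        rw [hkey idx]
        push_cast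
        simp
      · have hm1 : 1 ≤ m := by omega
        have heD : e ∈ D (m - 1) := hcarry m hm1 (by omega) cm hcmD cm' hcm'D
        apply gam_ext (gam_single_level hq hzero (show m - 1 < m by omega) heD)
        intro idx
        rw [hkey idx, show m - 1 + 1 = m from by omega]
    have hmid : Gam q n D m (fun idx => (fun idx => v' idx + w' idx) idx + u idx) :=
      IH (by omega) _ u (IH (by omega) v' w' hv' hw') hu
    have happ := gam_append hq hmid (hadd m (by omega) cm hcmD cm' hcm'D)
    apply gam_ext happ
    intro idx
    have hsig : (((cm + cm') idx).val : ℝ)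
        = ((cm idx).val : ℝ) + ((cm' idx).val : ℝ) - (q : ℝ) * ((e idx).val : ℝ) := by
      have := sigma_add hq cm cm' idx
      have h2 : (cm + cm') idx = cm idx + cm' idx := rfl
      rw [h2]
      exact_mod_cast this
    rw [hrep idx, hrep' idx, Finset.sum_range_succ, Finset.sum_range_succ]
    simp only []
    rw [hsig]
    ring

lemma gam_neg (hq : 2 ≤ q) (hzero : ∀ k, (0 : Fin n → ZMod q) ∈ D k)
    (hadd : ∀ k, k < a → ∀ x ∈ D k, ∀ y ∈ D k, x + y ∈ D k)
    (hneg : ∀ k, k < a → ∀ x ∈ D k, -x ∈ D k)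
    (hcarry : ∀ k, 1 ≤ k → k < a → ∀ x ∈ D k, ∀ y ∈ D k, zeroOne q n x y ∈ D (k - 1)) :
    ∀ m, m ≤ a → ∀ v : Fin n → ℝ, Gam q n D m v → Gam q n D m (fun idx => -(v idx)) := by
  have hq0 : (q : ℝ) ≠ 0 := by positivity
  intro m
  induction m with
  | zero =>
    intro _ v hv
    obtain ⟨z, c, hc, hrep⟩ := hv
    refine ⟨fun idx => -(z idx), fun _ => 0, fun k hk => absurd hk (Nat.not_lt_zero k), ?_⟩
    intro idx
    simp only [Finset.range_zero, Finset.sum_empty, add_zero] at hrep ⊢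
    rw [hrep idx]; push_cast; ring
  | succ m IH =>
    intro hma v hv
    obtain ⟨z, c, hc, hrep⟩ := hv
    set cm := c m with hcmdef
    have hcmD : cm ∈ D m := hc m (by omega)
    have hncmD : -cm ∈ D m := hneg m (by omega) cm hcmD
    set e := zeroOne q n cm (-cm) with hedef
    set v' : Fin n → ℝ := fun idx => (z idx : ℝ) +
      ∑ k ∈ Finset.range m, ((q : ℝ) ^ (k + 1))⁻¹ * ((c k idx).val : ℝ) with hv'def
    have hv' : Gam q n D m v' := ⟨z, c, fun k hk => hc k (by omega), fun idx => rfl⟩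
    set u : Fin n → ℝ := fun idx => ((q : ℝ) ^ (m + 1))⁻¹ * ((q : ℝ) * ((e idx).val : ℝ))
      with hudef
    have hu : Gam q n D m u := by
      have hkey : ∀ idx, u idx = ((q : ℝ) ^ m)⁻¹ * ((e idx).val : ℝ) := by
        intro idx
        rw [hudef]
        field_simp
        ring
      by_cases hm0 : m = 0
      · subst hm0
        apply gam_ext (gam_of_int (fun idx => ((e idx).val : ℤ)))
        intro idx
        rw [hkey idx]; push_cast; simp
      · have heD : e ∈ D (m - 1) := hcarry m (by omega) (by omega) cm hcmD (-cm) hncmD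
        apply gam_ext (gam_single_level hq hzero (show m - 1 < m by omega) heD)
        intro idx
        rw [hkey idx, show m - 1 + 1 = m from by omega]
    have hnv' : Gam q n D m (fun idx => -(v' idx)) := IH (by omega) v' hv'
    have hnu : Gam q n D m (fun idx => -(u idx)) := IH (by omega) u hu
    have hmid : Gam q n D m (fun idx => (fun idx => -(v' idx)) idx + (fun idx => -(u idx)) idx) :=
      gam_add hq hzero hadd hcarry m (by omega) _ _ hnv' hnu
    have happ := gam_append hq hmid hncmD
    apply gam_ext happ
    intro idx
    have hsig : (((-cm) idx).val : ℝ)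
        = (q : ℝ) * ((e idx).val : ℝ) - ((cm idx).val : ℝ) := by
      have h1 := sigma_add hq cm (-cm) idx
      have h2 : cm idx + (-cm) idx = 0 := by simp
      rw [h2, ← hedef] at h1
      haveI : NeZero q := ⟨by omega⟩
      simp only [ZMod.val_zero, Nat.cast_zero] at h1
      have h4 : (((-cm) idx).val : ℤ)
          = (q : ℤ) * ((e idx).val : ℤ) - ((cm idx).val : ℤ) := by linarith
      exact_mod_cast congrArg (Int.cast : ℤ → ℝ) h4
    rw [hrep idx, Finset.sum_range_succ]
    simp only []
    rw [hsig]
    ring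

lemma gam_zsmul (hq : 2 ≤ q) (hzero : ∀ k, (0 : Fin n → ZMod q) ∈ D k)
    (hadd : ∀ k, k < a → ∀ x ∈ D k, ∀ y ∈ D k, x + y ∈ D k)
    (hneg : ∀ k, k < a → ∀ x ∈ D k, -x ∈ D k)
    (hcarry : ∀ k, 1 ≤ k → k < a → ∀ x ∈ D k, ∀ y ∈ D k, zeroOne q n x y ∈ D (k - 1))
    {m : ℕ} (hma : m ≤ a) (t : ℤ) {v : Fin n → ℝ} (hv : Gam q n D m v) :
    Gam q n D m (fun idx => (t : ℝ) * v idx) := by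
  induction t using Int.induction_on with
  | zero => exact gam_ext (gam_zero_fun hq hzero m) (fun idx => by simp)
  | succ t IH =>
    have := gam_add hq hzero hadd hcarry m hma _ _ IH hv
    apply gam_ext this
    intro idx
    push_cast
    ring
  | pred t IH =>
    have hnv := gam_neg hq hzero hadd hneg hcarry m hma v hv
    have := gam_add hq hzero hadd hcarry m hma _ _ IH hnv
    apply gam_ext this
    intro idx
    push_cast
    ring

lemma dualCode_zero {q n : ℕ} (S : Set (Fin n → ZMod q)) : 0 ∈ dualCode q n S := by
  intro y _
  simp

lemma dualCode_add {q n : ℕ} {S : Set (Fin n → ZMod q)} {x x' : Fin n → ZMod q}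
    (hx : x ∈ dualCode q n S) (hx' : x' ∈ dualCode q n S) : x + x' ∈ dualCode q n S := by
  intro y hy
  have : ∀ i, (x + x') i * y i = x i * y i + x' i * y i := by
    intro i; simp [add_mul]
  rw [Finset.sum_congr rfl (fun i _ => this i), Finset.sum_add_distrib, hx y hy, hx' y hy,
    add_zero]

lemma dualCode_neg {q n : ℕ} {S : Set (Fin n → ZMod q)} {x : Fin n → ZMod q}
    (hx : x ∈ dualCode q n S) : -x ∈ dualCode q n S := by
  intro y hy
  have : ∀ i, (-x) i * y i = -(x i * y i) := by
    intro i; simp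
  rw [Finset.sum_congr rfl (fun i _ => this i), Finset.sum_neg_distrib, hx y hy, neg_zero]

lemma block {r : ℕ → ℕ} (hr0 : r 0 = 0) :
    ∀ m j, 1 ≤ j → j ≤ r m → ∃ m', 1 ≤ m' ∧ m' ≤ m ∧ r (m' - 1) < j ∧ j ≤ r m' := by
  intro m
  induction m with
  | zero => intro j hj1 hjr; rw [hr0] at hjr; omega
  | succ m IH =>
    intro j hj1 hjr
    by_cases hjm : j ≤ r m
    · obtain ⟨m', h1, h2, h3, h4⟩ := IH j hj1 hjm
      exact ⟨m', h1, by omega, h3, h4⟩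
    · exact ⟨m + 1, by omega, le_refl _, by simpa using Nat.lt_of_not_le hjm, hjr⟩

lemma claim_div {q a n : ℕ} (hq : 2 ≤ q) (ha : 1 ≤ a)
    (C : ℕ → Submodule (ZMod q) (Fin n → ZMod q))
    (r : ℕ → ℕ) (hr0 : r 0 = 0)
    (h : ℕ → Fin n → ZMod q)
    (hgen : ∀ ℓ, 1 ≤ ℓ → ℓ ≤ a →
      dualCode q n (C ℓ : Set (Fin n → ZMod q))
        = (Submodule.span (ZMod q) (h '' {j | 1 ≤ j ∧ j ≤ r ℓ}) : Set (Fin n → ZMod q)))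
    (hclosed : ∀ m, 1 ≤ m → m < a →
      ∀ c ∈ dualCode q n (C m : Set (Fin n → ZMod q)),
      ∀ c' ∈ dualCode q n (C m : Set (Fin n → ZMod q)),
        zeroOne q n c c' ∈ dualCode q n (C (m + 1) : Set (Fin n → ZMod q))) :
    ∀ i, i < a → ∀ c ∈ dualCode q n (C (a - i) : Set (Fin n → ZMod q)),
      ∀ x ∈ lambdaDprime q a n r h,
        ((q : ℤ) ^ (i + 1)) ∣ ∑ k, x k * ((c k).val : ℤ) := by
  haveI : NeZero q := ⟨by omega⟩
  intro i
  induction i using Nat.strong_induction_on with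
  | _ i IH =>
    intro hia c hc x hx
    set P : (Fin n → ZMod q) → Prop := fun c =>
      c ∈ dualCode q n (C (a - i) : Set (Fin n → ZMod q)) ∧
      ((q : ℤ) ^ (i + 1)) ∣ ∑ k, x k * ((c k).val : ℤ) with hP
    have haddP : ∀ y z, P y → P z → P (y + z) := by
      intro y z hy hz
      constructor
      · exact dualCode_add hy.1 hz.1
      · set e := zeroOne q n y z with he
        have hsum : ∑ k, x k * (((y + z) k).val : ℤ)
            = (∑ k, x k * ((y k).val : ℤ)) + (∑ k, x k * ((z k).val : ℤ))
              - q * ∑ k, x k * ((e k).val : ℤ) := by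
          have hterm : ∀ k ∈ Finset.univ, x k * (((y + z) k).val : ℤ)
              = (x k * ((y k).val : ℤ) + x k * ((z k).val : ℤ))
                - (q : ℤ) * (x k * ((e k).val : ℤ)) := by
            intro k _
            have h1 : (y + z) k = y k + z k := rfl
            rw [h1, sigma_add hq y z k]
            ring
          rw [Finset.sum_congr rfl hterm, Finset.sum_sub_distrib, Finset.sum_add_distrib,
            ← Finset.mul_sum]
        rw [hsum]
        have hqe : ((q : ℤ) ^ (i + 1)) ∣ q * ∑ k, x k * ((e k).val : ℤ) := by
          by_cases hi0 : i = 0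
          · subst hi0
            simpa using Dvd.intro _ rfl
          · have h1 : 1 ≤ a - i := by omega
            have h2 : a - i < a := by omega
            have heD : e ∈ dualCode q n (C (a - i + 1) : Set (Fin n → ZMod q)) :=
              hclosed (a - i) h1 h2 y hy.1 z hz.1
            have h3 : a - i + 1 = a - (i - 1) := by omega
            rw [h3] at heD
            have h4 := IH (i - 1) (by omega) (by omega) e heD x hx
            have h5 : (q : ℤ) ^ (i + 1) = q * (q : ℤ) ^ (i - 1 + 1) := by
              rw [← pow_succ']
              congr 1
              omega
            rw [h5]
            exact mul_dvd_mul_left _ h4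
        exact dvd_sub (dvd_add hy.2 hz.2) hqe
    have hmain : ∀ c, c ∈ Submodule.span (ZMod q) (h '' {j | 1 ≤ j ∧ j ≤ r (a - i)}) → P c := by
      intro c hc
      induction hc using Submodule.span_induction with
      | mem g hg =>
        obtain ⟨j, ⟨hj1, hjr⟩, rfl⟩ := hg
        constructor
        · rw [hgen (a - i) (by omega) (by omega)]
          exact Submodule.subset_span ⟨j, ⟨hj1, hjr⟩, rfl⟩
        · obtain ⟨m', hm'1, hm'2, hm'3, hm'4⟩ := block hr0 (a - i) j hj1 hjr
          set i' := a - m' with hi'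
          have hi'a : i' < a := by omega
          have hii' : i ≤ i' := by omega
          have e1 : a - i' - 1 = m' - 1 := by omega
          have e2 : a - i' = m' := by omega
          have hdiv := hx i' hi'a j (by rw [e1]; exact hm'3) (by rw [e2]; exact hm'4)
          exact dvd_trans (pow_dvd_pow (q : ℤ) (by omega)) hdiv
      | zero =>
        constructor
        · exact dualCode_zero _
        · have : ∀ k, x k * (((0 : Fin n → ZMod q) k).val : ℤ) = 0 := by
            intro k; simp [ZMod.val_zero]
          rw [Finset.sum_congr rfl (fun k _ => this k), Finset.sum_const_zero]
          exact dvd_zero _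
      | add y z _ _ hy hz => exact haddP y z hy hz
      | smul α y _ hy =>
        have hsm : α • y = (α.val : ℕ) • y := by
          rw [← Nat.cast_smul_eq_nsmul (ZMod q), self_natCast_val hq]
        rw [hsm]
        have : ∀ mcnt : ℕ, P (mcnt • y) := by
          intro mcnt
          induction mcnt with
          | zero =>
            rw [zero_smul]
            constructor
            · exact dualCode_zero _
            · have : ∀ k, x k * (((0 : Fin n → ZMod q) k).val : ℤ) = 0 := by
                intro k; simp [ZMod.val_zero]
              rw [Finset.sum_congr rfl (fun k _ => this k), Finset.sum_const_zero]
              exact dvd_zero _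
          | succ mc IHm =>
            rw [succ_nsmul]
            exact haddP _ _ IHm hy
        exact this α.val
    have hc' : c ∈ Submodule.span (ZMod q) (h '' {j | 1 ≤ j ∧ j ≤ r (a - i)}) := by
      have := hgen (a - i) (by omega) (by omega)
      rw [this] at hc
      exact hc
    exact (hmain c hc').2

/-- Main duality lemma: every dual lattice vector has a normal form. -/
lemma dual_sub_gam {q a n : ℕ} (hq : 2 ≤ q) (ha : 1 ≤ a)
    (C : ℕ → Submodule (ZMod q) (Fin n → ZMod q))
    (r : ℕ → ℕ) (hr0 : r 0 = 0)
    (h : ℕ → Fin n → ZMod q)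
    (hgen : ∀ ℓ, 1 ≤ ℓ → ℓ ≤ a →
      dualCode q n (C ℓ : Set (Fin n → ZMod q))
        = (Submodule.span (ZMod q) (h '' {j | 1 ≤ j ∧ j ≤ r ℓ}) : Set (Fin n → ZMod q)))
    (hclosed : ∀ m, 1 ≤ m → m < a →
      ∀ c ∈ dualCode q n (C m : Set (Fin n → ZMod q)),
      ∀ c' ∈ dualCode q n (C m : Set (Fin n → ZMod q)),
        zeroOne q n c c' ∈ dualCode q n (C (m + 1) : Set (Fin n → ZMod q)))
    (v : Fin n → ℝ)
    (hv : v ∈ dualLattice n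
      ((fun v : Fin n → ℤ => fun i => (v i : ℝ)) '' lambdaDprime q a n r h)) :
    Gam q n (fun k => dualCode q n (C (a - k) : Set (Fin n → ZMod q))) a v := by
  haveI : NeZero q := ⟨by omega⟩
  haveI : NeZero (q ^ a) := ⟨pow_ne_zero a (by omega)⟩
  have hq0R : (q : ℝ) ≠ 0 := by positivity
  have hqaR : ((q : ℝ) ^ a) ≠ 0 := by positivity
  set D : ℕ → Set (Fin n → ZMod q) := fun k => dualCode q n (C (a - k) : Set (Fin n → ZMod q))
    with hD
  have hzero : ∀ k, (0 : Fin n → ZMod q) ∈ D k := fun k => dualCode_zero _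
  have hadd : ∀ k, k < a → ∀ x ∈ D k, ∀ y ∈ D k, x + y ∈ D k :=
    fun k _ x hx y hy => dualCode_add hx hy
  have hneg : ∀ k, k < a → ∀ x ∈ D k, -x ∈ D k := fun k _ x hx => dualCode_neg hx
  have hcarry : ∀ k, 1 ≤ k → k < a → ∀ x ∈ D k, ∀ y ∈ D k, zeroOne q n x y ∈ D (k - 1) := by
    intro k hk1 hka x hx y hy
    have h1 := hclosed (a - k) (by omega) (by omega) x hx y hy
    have h2 : a - k + 1 = a - (k - 1) := by omega
    rw [h2] at h1
    exact h1
  -- membership of h j in the right dual codes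
  have hgenD : ∀ i j, i < a → r (a - i - 1) < j → j ≤ r (a - i) → h j ∈ D i := by
    intro i j hia hji hjr
    rw [hD]
    simp only []
    rw [hgen (a - i) (by omega) (by omega)]
    exact Submodule.subset_span ⟨j, ⟨by omega, hjr⟩, rfl⟩
  -- the dual pairing: v pairs integrally with lattice vectors
  have hvp : ∀ x ∈ lambdaDprime q a n r h, ∃ m : ℤ, ∑ k, v k * (x k : ℝ) = (m : ℝ) := by
    intro x hx
    exact hv _ ⟨x, hx, rfl⟩
  -- q^a ℤⁿ ⊆ Λ
  have hNmem : ∀ z : Fin n → ℤ, (fun k => (q : ℤ) ^ a * z k) ∈ lambdaDprime q a n r h := by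
    intro z i hia j _ _
    have : ∑ k, ((q : ℤ) ^ a * z k) * ((h j k).val : ℤ)
        = (q : ℤ) ^ a * ∑ k, z k * ((h j k).val : ℤ) := by
      rw [Finset.mul_sum]
      apply Finset.sum_congr rfl
      intro k _
      ring
    rw [this]
    exact dvd_mul_of_dvd_left (pow_dvd_pow _ (by omega)) _
  -- q^a * v is integral
  have hNv : ∀ k0 : Fin n, ∃ m : ℤ, (q : ℝ) ^ a * v k0 = (m : ℝ) := by
    intro k0
    classical
    obtain ⟨m, hm⟩ := hvp _ (hNmem (fun k => if k = k0 then 1 else 0))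
    refine ⟨m, ?_⟩
    rw [← hm]
    rw [Finset.sum_eq_single k0]
    · simp only [if_pos rfl, mul_one]
      push_cast
      ring
    · intro k _ hk
      simp [hk]
    · intro hk
      exact absurd (Finset.mem_univ k0) hk
  choose w hw using hNv
  -- pairing congruence for w
  have hpair : ∀ x ∈ lambdaDprime q a n r h,
      ∃ m : ℤ, ∑ k, w k * x k = (q : ℤ) ^ a * m := by
    intro x hx
    obtain ⟨m, hm⟩ := hvp x hx
    refine ⟨m, ?_⟩
    have hR : ((∑ k, w k * x k : ℤ) : ℝ) = (((q : ℤ) ^ a * m : ℤ) : ℝ) := by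
      push_cast
      calc ∑ k, (w k : ℝ) * (x k : ℝ) = ∑ k, ((q : ℝ) ^ a * v k) * (x k : ℝ) := by
            apply Finset.sum_congr rfl
            intro k _
            rw [hw k]
      _ = (q : ℝ) ^ a * ∑ k, v k * (x k : ℝ) := by
            rw [Finset.mul_sum]
            apply Finset.sum_congr rfl
            intro k _
            ring
      _ = (q : ℝ) ^ a * m := by rw [hm]
    exact_mod_cast hR
  -- generators over ZMod (q^a)
  set N := q ^ a with hN
  set genSet : Set (Fin n → ZMod N) := {g | ∃ i, i < a ∧ ∃ j, r (a - i - 1) < j ∧ j ≤ r (a - i) ∧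
    g = fun k => (q : ZMod N) ^ (a - i - 1) * ((h j k).val : ZMod N)} with hgenSet
  set K : Submodule (ZMod N) (Fin n → ZMod N) := Submodule.span (ZMod N) genSet with hK
  -- membership in Λ ↔ orthogonality to generators
  have hiff : ∀ x : Fin n → ℤ, x ∈ lambdaDprime q a n r h ↔
      ∀ g ∈ genSet, ∑ k, ((x k : ℤ) : ZMod N) * g k = 0 := by
    intro x
    have hsingle : ∀ i j, i < a →
        ((∑ k, ((x k : ℤ) : ZMod N) * ((q : ZMod N) ^ (a - i - 1) * ((h j k).val : ZMod N)) = 0)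
          ↔ ((q : ℤ) ^ (i + 1) ∣ ∑ k, x k * ((h j k).val : ℤ))) := by
      intro i j hia
      have hcast : ∑ k, ((x k : ℤ) : ZMod N) * ((q : ZMod N) ^ (a - i - 1) * ((h j k).val : ZMod N))
          = (((q : ℤ) ^ (a - i - 1) * ∑ k, x k * ((h j k).val : ℤ) : ℤ) : ZMod N) := by
        push_cast
        rw [Finset.mul_sum]
        apply Finset.sum_congr rfl
        intro k _
        ring
      rw [hcast, ZMod.intCast_zmod_eq_zero_iff_dvd]
      have hNsplit : ((N : ℕ) : ℤ) = (q : ℤ) ^ (a - i - 1) * (q : ℤ) ^ (i + 1) := by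
        rw [hN]
        push_cast
        rw [← pow_add]
        congr 1
        omega
      rw [hNsplit]
      constructor
      · intro hdvd
        have hne : ((q : ℤ) ^ (a - i - 1)) ≠ 0 := pow_ne_zero _ (by exact_mod_cast (by omega : q ≠ 0))
        exact (mul_dvd_mul_iff_left hne).mp hdvd
      · intro hdvd
        exact mul_dvd_mul_left _ hdvd
    constructor
    · intro hx g hg
      obtain ⟨i, hia, j, hj1, hj2, rfl⟩ := hg
      exact (hsingle i j hia).mpr (hx i hia j hj1 hj2)
    · intro hall i hia j hj1 hj2
      exact (hsingle i j hia).mp (hall _ ⟨i, hia, j, hj1, hj2, rfl⟩)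
  -- w mod N lies in K
  have hwK : (fun k => ((w k : ℤ) : ZMod N)) ∈ K := by
    by_contra hnot
    obtain ⟨v', hv'K, hv'w⟩ := sep K _ hnot
    set x : Fin n → ℤ := fun k => ((v' k).val : ℤ) with hx
    have hxbar : ∀ k, ((x k : ℤ) : ZMod N) = v' k := by
      intro k
      rw [hx]
      push_cast
      exact self_natCast_val' (v' k)
    have hxL : x ∈ lambdaDprime q a n r h := by
      rw [hiff]
      intro g hg
      have : ∀ k, ((x k : ℤ) : ZMod N) * g k = v' k * g k := by
        intro k; rw [hxbar k]
      rw [Finset.sum_congr rfl (fun k _ => this k)]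
      exact hv'K g (Submodule.subset_span hg)
    obtain ⟨m, hm⟩ := hpair x hxL
    have hcast : ((∑ k, w k * x k : ℤ) : ZMod N) = 0 := by
      rw [hm]
      have hN0 : ((q : ZMod N)) ^ a = 0 := by
        have : (((q ^ a : ℕ) : ZMod N)) = 0 := by
          rw [hN]; exact ZMod.natCast_self _
        push_cast at this
        exact this
      push_cast
      rw [hN0, zero_mul]
    have : ∑ k, v' k * ((w k : ℤ) : ZMod N) = 0 := by
      rw [← hcast]
      push_cast
      apply Finset.sum_congr rfl
      intro k _
      rw [← hxbar k]
      push_cast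
      ring
    exact hv'w this
  -- span induction: elements of K lift to Gam forms
  have hKgam : ∀ u ∈ K, ∀ ww : Fin n → ℤ, (∀ k, ((ww k : ℤ) : ZMod N) = u k) →
      Gam q n D a (fun idx => (ww idx : ℝ) / (q : ℝ) ^ a) := by
    intro u hu
    induction hu using Submodule.span_induction with
    | mem g hg =>
      intro ww hww
      obtain ⟨i, hia, j, hj1, hj2, rfl⟩ := hg
      have hdvd : ∀ k, ((N : ℕ) : ℤ) ∣ ww k - (q : ℤ) ^ (a - i - 1) * ((h j k).val : ℤ) := by
        intro k
        rw [← ZMod.intCast_zmod_eq_zero_iff_dvd]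
        push_cast
        rw [hww k]
        push_cast
        ring
      choose z hz using hdvd
      have hzk : ∀ k, ww k = (q : ℤ) ^ (a - i - 1) * ((h j k).val : ℤ) + (N : ℕ) * z k := by
        intro k
        have := hz k
        omega
      have hsingle := gam_single_level (D := D) hq hzero hia (hgenD i j hia hj1 hj2)
      have hint : Gam q n D a (fun idx => ((z idx : ℤ) : ℝ)) :=
        gam_mono hq hzero (Nat.zero_le a) (gam_of_int z)
      have hsum := gam_add hq hzero hadd hcarry a (le_refl a) _ _ hint hsingle
      apply gam_ext hsum
      intro idx
      rw [show (ww idx : ℝ) = ((q : ℤ) ^ (a - i - 1) * ((h j idx).val : ℤ) + (N : ℕ) * z idx : ℤ) by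
        exact_mod_cast congrArg (Int.cast : ℤ → ℝ) (hzk idx)]
      push_cast
      rw [hN]
      push_cast
      have hsplit : (q : ℝ) ^ a = (q : ℝ) ^ (a - i - 1) * (q : ℝ) ^ (i + 1) := by
        rw [← pow_add]
        congr 1
        omega
      field_simp
      rw [hsplit]
      ring
    | zero =>
      intro ww hww
      have hdvd : ∀ k, ((N : ℕ) : ℤ) ∣ ww k := by
        intro k
        rw [← ZMod.intCast_zmod_eq_zero_iff_dvd]
        exact hww k
      choose z hz using hdvd
      apply gam_ext (gam_mono hq hzero (Nat.zero_le a) (gam_of_int z))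
      intro idx
      rw [hz idx]
      rw [hN]
      push_cast
      field_simp
    | add u1 u2 hu1 hu2 IH1 IH2 =>
      intro ww hww
      set w1 : Fin n → ℤ := fun k => ((u1 k).val : ℤ) with hw1
      have hw1lift : ∀ k, ((w1 k : ℤ) : ZMod N) = u1 k := by
        intro k
        rw [hw1]
        push_cast
        exact self_natCast_val' (u1 k)
      set w2 : Fin n → ℤ := fun k => ww k - w1 k with hw2
      have hw2lift : ∀ k, ((w2 k : ℤ) : ZMod N) = u2 k := by
        intro k
        rw [hw2]
        push_cast
        rw [hww k, hw1lift k]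
        simp [Pi.add_apply]
      have h1 := IH1 w1 hw1lift
      have h2 := IH2 w2 hw2lift
      have := gam_add hq hzero hadd hcarry a (le_refl a) _ _ h1 h2
      apply gam_ext this
      intro idx
      rw [hw2]
      push_cast
      ring
    | smul α u1 hu1 IH1 =>
      intro ww hww
      set w1 : Fin n → ℤ := fun k => ((u1 k).val : ℤ) with hw1
      have hw1lift : ∀ k, ((w1 k : ℤ) : ZMod N) = u1 k := by
        intro k
        rw [hw1]
        push_cast
        exact self_natCast_val' (u1 k)
      have h1 := IH1 w1 hw1lift
      set t : ℤ := ((α.val : ℕ) : ℤ) with ht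
      have hdvd : ∀ k, ((N : ℕ) : ℤ) ∣ ww k - t * w1 k := by
        intro k
        rw [← ZMod.intCast_zmod_eq_zero_iff_dvd]
        push_cast
        rw [hww k, hw1lift k]
        have h5 : (α • u1) k = α * u1 k := rfl
        rw [h5, ht]
        push_cast [self_natCast_val' α]
        ring
      choose z hz using hdvd
      have hsm := gam_zsmul hq hzero hadd hneg hcarry (le_refl a) t h1
      have hint : Gam q n D a (fun idx => ((z idx : ℤ) : ℝ)) :=
        gam_mono hq hzero (Nat.zero_le a) (gam_of_int z)
      have := gam_add hq hzero hadd hcarry a (le_refl a) _ _ hsm hint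
      apply gam_ext this
      intro idx
      have hz' : ww idx = t * w1 idx + (N : ℕ) * z idx := by
        have := hz idx
        omega
      rw [show (ww idx : ℝ) = ((t * w1 idx + (N : ℕ) * z idx : ℤ) : ℝ) by
        exact_mod_cast congrArg (Int.cast : ℤ → ℝ) hz']
      push_cast
      rw [hN]
      push_cast
      field_simp
  -- conclude
  have hfinal := hKgam _ hwK w (fun k => rfl)
  apply gam_ext hfinal
  intro idx
  rw [div_eq_iff (by positivity : ((q : ℝ) ^ a) ≠ 0)]
  linarith [hw idx]

lemma codeDistP_set_nonneg {q n : ℕ} {P : ℝ} (hP : 1 ≤ P) (C : Set (Fin n → ZMod q)) :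
    ∀ d ∈ {d : ℝ | ∃ x ∈ C, ∃ y ∈ C, x ≠ y ∧
      d = (∑ i, ((min ((x i - y i).val) (q - (x i - y i).val) : ℕ) : ℝ) ^ P) ^ (1 / P)}, 0 ≤ d := by
  rintro d ⟨x, hx, y, hy, hxy, rfl⟩
  apply Real.rpow_nonneg
  apply Finset.sum_nonneg
  intro i _
  apply Real.rpow_nonneg
  positivity

lemma codeDistP_nonneg {q n : ℕ} {P : ℝ} (hP : 1 ≤ P) (C : Set (Fin n → ZMod q)) :
    0 ≤ codeDistP q n P C :=
  Real.sInf_nonneg (codeDistP_set_nonneg hP C)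

lemma norm_scale {n : ℕ} {P : ℝ} (hP : 1 ≤ P) {b : ℝ} (hb : 0 ≤ b) (f : Fin n → ℝ)
    (hf : ∀ i, 0 ≤ f i) :
    (∑ i, (b * f i) ^ P) ^ (1 / P) = b * (∑ i, f i ^ P) ^ (1 / P) := by
  have hP0 : P ≠ 0 := by positivity
  have h1 : ∀ i ∈ Finset.univ, (b * f i) ^ P = b ^ P * f i ^ P := by
    intro i _
    exact Real.mul_rpow hb (hf i)
  rw [Finset.sum_congr rfl h1, ← Finset.mul_sum]
  have hsum : 0 ≤ ∑ i, f i ^ P := by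
    apply Finset.sum_nonneg
    intro i _
    exact Real.rpow_nonneg (hf i) P
  rw [Real.mul_rpow (Real.rpow_nonneg hb P) hsum]
  congr 1
  rw [← Real.rpow_mul hb, mul_one_div_cancel hP0, Real.rpow_one]

lemma intvec_mem_dualLattice {n : ℕ} (L' : Set (Fin n → ℤ)) (z : Fin n → ℤ) :
    (fun i => (z i : ℝ)) ∈ dualLattice n ((fun v : Fin n → ℤ => fun i => (v i : ℝ)) '' L') := by
  rintro x ⟨x0, _, rfl⟩
  refine ⟨∑ i, z i * x0 i, ?_⟩
  push_cast
  rfl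

lemma sub_mem_dualLattice {n : ℕ} {S : Set (Fin n → ℝ)} {u u' : Fin n → ℝ}
    (hu : u ∈ dualLattice n S) (hu' : u' ∈ dualLattice n S) :
    (fun i => u i - u' i) ∈ dualLattice n S := by
  intro x hx
  obtain ⟨k1, hk1⟩ := hu x hx
  obtain ⟨k2, hk2⟩ := hu' x hx
  refine ⟨k1 - k2, ?_⟩
  have : ∀ i ∈ Finset.univ, (u i - u' i) * x i = u i * x i - u' i * x i := by
    intro i _; ring
  rw [Finset.sum_congr rfl this, Finset.sum_sub_distrib, hk1, hk2]
  push_cast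
  ring


lemma scaled_mem_dualLattice {q a n : ℕ} (hq : 2 ≤ q) (ha : 1 ≤ a)
    (C : ℕ → Submodule (ZMod q) (Fin n → ZMod q))
    (r : ℕ → ℕ) (hr0 : r 0 = 0)
    (h : ℕ → Fin n → ZMod q)
    (hgen : ∀ ℓ, 1 ≤ ℓ → ℓ ≤ a →
      dualCode q n (C ℓ : Set (Fin n → ZMod q))
        = (Submodule.span (ZMod q) (h '' {j | 1 ≤ j ∧ j ≤ r ℓ}) : Set (Fin n → ZMod q)))
    (hclosed : ∀ m, 1 ≤ m → m < a →
      ∀ c ∈ dualCode q n (C m : Set (Fin n → ZMod q)),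
      ∀ c' ∈ dualCode q n (C m : Set (Fin n → ZMod q)),
        zeroOne q n c c' ∈ dualCode q n (C (m + 1) : Set (Fin n → ZMod q)))
    {i : ℕ} (hia : i < a) {c : Fin n → ZMod q}
    (hc : c ∈ dualCode q n (C (a - i) : Set (Fin n → ZMod q))) :
    (fun idx => ((q : ℝ) ^ (i + 1))⁻¹ * ((c idx).val : ℝ)) ∈ dualLattice n
      ((fun v : Fin n → ℤ => fun i => (v i : ℝ)) '' lambdaDprime q a n r h) := by
  rintro x ⟨x0, hx0, rfl⟩
  obtain ⟨m, hm⟩ := claim_div hq ha C r hr0 h hgen hclosed i hia c hc x0 hx0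
  refine ⟨m, ?_⟩
  have hq1 : ((q : ℝ) ^ (i + 1)) ≠ 0 := by positivity
  have hcast : (∑ k, x0 k * ((c k).val : ℤ) : ℝ) = (q : ℝ) ^ (i + 1) * m := by
    exact_mod_cast congrArg (Int.cast : ℤ → ℝ) hm
  push_cast at hcast
  have : ∀ k ∈ Finset.univ, ((q : ℝ) ^ (i + 1))⁻¹ * ((c k).val : ℝ) * ((x0 k : ℤ) : ℝ)
      = ((q : ℝ) ^ (i + 1))⁻¹ * (((x0 k : ℤ) : ℝ) * ((c k).val : ℝ)) := by
    intro k _; ring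
  rw [Finset.sum_congr rfl this, ← Finset.mul_sum, hcast]
  field_simp

lemma witness_vector {q a n : ℕ} (hq : 2 ≤ q) (ha : 1 ≤ a)
    (C : ℕ → Submodule (ZMod q) (Fin n → ZMod q))
    (r : ℕ → ℕ) (hr0 : r 0 = 0)
    (h : ℕ → Fin n → ZMod q)
    (hgen : ∀ ℓ, 1 ≤ ℓ → ℓ ≤ a →
      dualCode q n (C ℓ : Set (Fin n → ZMod q))
        = (Submodule.span (ZMod q) (h '' {j | 1 ≤ j ∧ j ≤ r ℓ}) : Set (Fin n → ZMod q)))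
    (hclosed : ∀ m, 1 ≤ m → m < a →
      ∀ c ∈ dualCode q n (C m : Set (Fin n → ZMod q)),
      ∀ c' ∈ dualCode q n (C m : Set (Fin n → ZMod q)),
        zeroOne q n c c' ∈ dualCode q n (C (m + 1) : Set (Fin n → ZMod q)))
    {P : ℝ} (hP : 1 ≤ P)
    {ℓ : ℕ} (hℓ1 : 1 ≤ ℓ) (hℓa : ℓ ≤ a)
    {c : Fin n → ZMod q} (hc : c ∈ dualCode q n (C ℓ : Set (Fin n → ZMod q))) (hc0 : c ≠ 0) :
    ∃ vv ∈ dualLattice n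
      ((fun v : Fin n → ℤ => fun i => (v i : ℝ)) '' lambdaDprime q a n r h),
      vv ≠ 0 ∧ (∑ idx, |vv idx| ^ P) ^ (1 / P)
        = ((q : ℝ) ^ (a - ℓ + 1))⁻¹
          * (∑ idx, ((min ((c idx).val) (q - (c idx).val) : ℕ) : ℝ) ^ P) ^ (1 / P) := by
  haveI : NeZero q := ⟨by omega⟩
  set t := a - ℓ + 1 with ht
  have hqt : (0 : ℝ) < (q : ℝ) ^ t := by positivity
  set e01 := zeroOne q n c c with he01
  set vv : Fin n → ℝ := fun idx =>
    ((q : ℝ) ^ t)⁻¹ * (((c idx).val : ℝ) - (q : ℝ) * ((e01 idx).val : ℝ)) with hvv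
  -- vv ∈ dual lattice
  have hvc : (fun idx => ((q : ℝ) ^ (a - ℓ + 1))⁻¹ * ((c idx).val : ℝ)) ∈ dualLattice n
      ((fun v : Fin n → ℤ => fun i => (v i : ℝ)) '' lambdaDprime q a n r h) := by
    have h1 : a - ℓ + 1 = (a - ℓ) + 1 := rfl
    have hc' : c ∈ dualCode q n (C (a - (a - ℓ)) : Set (Fin n → ZMod q)) := by
      rw [show a - (a - ℓ) = ℓ from by omega]
      exact hc
    exact scaled_mem_dualLattice hq ha C r hr0 h hgen hclosed (by omega : a - ℓ < a) hc'
  have hve : (fun idx => ((q : ℝ) ^ (a - ℓ))⁻¹ * ((e01 idx).val : ℝ)) ∈ dualLattice n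
      ((fun v : Fin n → ℤ => fun i => (v i : ℝ)) '' lambdaDprime q a n r h) := by
    by_cases hla : ℓ = a
    · subst hla
      rw [show ℓ - ℓ = 0 from by omega]
      have := intvec_mem_dualLattice (lambdaDprime q ℓ n r h) (fun idx => ((e01 idx).val : ℤ))
      have heq : (fun idx => (((e01 idx).val : ℤ) : ℝ))
          = fun idx => ((q : ℝ) ^ 0)⁻¹ * ((e01 idx).val : ℝ) := by
        funext idx
        push_cast
        simp
      rw [← heq]
      exact this
    · have hℓa' : ℓ < a := by omega
      have heD : e01 ∈ dualCode q n (C (ℓ + 1) : Set (Fin n → ZMod q)) :=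
        hclosed ℓ hℓ1 hℓa' c hc c hc
      have heD' : e01 ∈ dualCode q n (C (a - (a - ℓ - 1)) : Set (Fin n → ZMod q)) := by
        rw [show a - (a - ℓ - 1) = ℓ + 1 from by omega]
        exact heD
      have := scaled_mem_dualLattice hq ha C r hr0 h hgen hclosed
        (by omega : a - ℓ - 1 < a) heD'
      rw [show a - ℓ - 1 + 1 = a - ℓ from by omega] at this
      exact this
  have hvvmem : vv ∈ dualLattice n
      ((fun v : Fin n → ℤ => fun i => (v i : ℝ)) '' lambdaDprime q a n r h) := by
    have := sub_mem_dualLattice hvc hve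
    have heq : ∀ idx, (fun i => ((q : ℝ) ^ (a - ℓ + 1))⁻¹ * ((c i).val : ℝ)
        - ((q : ℝ) ^ (a - ℓ))⁻¹ * ((e01 i).val : ℝ)) idx = vv idx := by
      intro idx
      rw [hvv]
      simp only []
      have hsplit : ((q : ℝ) ^ (a - ℓ))⁻¹ = ((q : ℝ) ^ t)⁻¹ * (q : ℝ) := by
        rw [ht, pow_succ]
        have hq0 : (q : ℝ) ≠ 0 := by positivity
        field_simp
      rw [hsplit, ht]
      ring
    have h2 : (fun i => ((q : ℝ) ^ (a - ℓ + 1))⁻¹ * ((c i).val : ℝ)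
        - ((q : ℝ) ^ (a - ℓ))⁻¹ * ((e01 i).val : ℝ)) = vv := funext heq
    rw [← h2]
    exact this
  -- coordinatewise absolute values
  have habs : ∀ idx, |vv idx|
      = ((q : ℝ) ^ t)⁻¹ * ((min ((c idx).val) (q - (c idx).val) : ℕ) : ℝ) := by
    intro idx
    have hval : (c idx).val < q := ZMod.val_lt _
    have he01v : ((e01 idx).val : ℤ)
        = if (c idx).val + (c idx).val < q then 0 else 1 := zeroOne_val hq c c idx
    rw [hvv]
    simp only []
    by_cases hlt : (c idx).val + (c idx).val < q
    · rw [if_pos hlt] at he01v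
      have he0 : ((e01 idx).val : ℝ) = 0 := by exact_mod_cast he01v
      rw [he0, mul_zero, sub_zero]
      rw [abs_of_nonneg (by positivity)]
      congr 1
      rw [show min ((c idx).val) (q - (c idx).val) = (c idx).val from by omega]
    · rw [if_neg hlt] at he01v
      have he0 : ((e01 idx).val : ℝ) = 1 := by exact_mod_cast he01v
      rw [he0, mul_one]
      have hle : ((c idx).val : ℝ) - (q : ℝ) ≤ 0 := by
        have : ((c idx).val : ℝ) < q := by exact_mod_cast hval
        linarith
      rw [abs_of_nonpos (by
        apply mul_nonpos_of_nonneg_of_nonpos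
        · positivity
        · exact hle)]
      rw [show min ((c idx).val) (q - (c idx).val) = q - (c idx).val from by omega]
      rw [← mul_neg]
      congr 1
      push_cast [Nat.cast_sub (le_of_lt hval)]
      ring
  -- vv ≠ 0
  have hvv0 : vv ≠ 0 := by
    have : ∃ idx, c idx ≠ 0 := by
      by_contra hno
      push_neg at hno
      exact hc0 (funext hno)
    obtain ⟨idx, hidx⟩ := this
    have hvalpos : 1 ≤ (c idx).val := by
      rcases Nat.eq_zero_or_pos ((c idx).val) with h0 | h0
      · exact absurd ((ZMod.val_eq_zero _).mp h0) hidx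
      · omega
    have hval : (c idx).val < q := ZMod.val_lt _
    have hminpos : 1 ≤ min ((c idx).val) (q - (c idx).val) := by omega
    intro h0
    have : |vv idx| = 0 := by rw [h0]; simp
    rw [habs idx] at this
    have h1 : ((min ((c idx).val) (q - (c idx).val) : ℕ) : ℝ) ≥ 1 := by
      exact_mod_cast hminpos
    have h2 : ((q : ℝ) ^ t)⁻¹ > 0 := by positivity
    nlinarith
  refine ⟨vv, hvvmem, hvv0, ?_⟩
  have hterm : ∀ idx ∈ Finset.univ, |vv idx| ^ P
      = (((q : ℝ) ^ t)⁻¹ * ((min ((c idx).val) (q - (c idx).val) : ℕ) : ℝ)) ^ P := by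
    intro idx _
    rw [habs idx]
  rw [Finset.sum_congr rfl hterm]
  rw [norm_scale hP (by positivity) _ (fun idx => by positivity)]

lemma dual_nontrivial {q a n : ℕ} (hq : 2 ≤ q) (ha : 1 ≤ a)
    (C : ℕ → Submodule (ZMod q) (Fin n → ZMod q))
    (hnested : ∀ ℓ, 1 ≤ ℓ → ℓ < a → C (ℓ + 1) ≤ C ℓ)
    (hproper : C 1 ≠ ⊤) :
    ∀ ℓ, 1 ≤ ℓ → ℓ ≤ a → ∃ c ∈ dualCode q n (C ℓ : Set (Fin n → ZMod q)), c ≠ 0 := by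
  haveI : NeZero q := ⟨by omega⟩
  have hex : ∃ w, w ∉ C 1 := by
    by_contra hno
    push_neg at hno
    exact hproper (Submodule.eq_top_iff'.mpr hno)
  obtain ⟨w, hw⟩ := hex
  obtain ⟨v', hv'K, hv'w⟩ := sep (C 1) w hw
  have hv'0 : v' ≠ 0 := by
    rintro rfl
    apply hv'w
    simp
  have hD1 : v' ∈ dualCode q n (C 1 : Set (Fin n → ZMod q)) := fun y hy => hv'K y hy
  have hchain : ∀ ℓ, 1 ≤ ℓ → ℓ ≤ a →
      dualCode q n (C 1 : Set (Fin n → ZMod q)) ⊆ dualCode q n (C ℓ : Set (Fin n → ZMod q)) := by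
    intro ℓ
    induction ℓ with
    | zero => omega
    | succ m IH =>
      intro h1 h2
      by_cases hm : m = 0
      · subst hm
        exact subset_refl _
      · have hsub := IH (by omega) (by omega)
        intro x hx y hy
        exact hsub hx y (hnested m (by omega) (by omega) hy)
  exact fun ℓ h1 h2 => ⟨v', hchain ℓ h1 h2 hD1, hv'0⟩


end LDP

open LDP

/-- If the dual chain `C_1⊥ ⊆ ⋯ ⊆ C_a⊥` is closed under zero-one addition,
then `d_P(Λ_{D'}*) = min {1, q⁻¹ d_P(C_a⊥), …, q^{-a} d_P(C_1⊥)}`. -/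
theorem lpDist_dual_lambdaDprime (q a n : ℕ) (hq : 2 ≤ q) (ha : 1 ≤ a)
    (C : ℕ → Submodule (ZMod q) (Fin n → ZMod q))
    (hnested : ∀ ℓ, 1 ≤ ℓ → ℓ < a → C (ℓ + 1) ≤ C ℓ)
    (hproper : C 1 ≠ ⊤)
    (r : ℕ → ℕ) (hr0 : r 0 = 0) (hrmono : ∀ ℓ < a, r ℓ ≤ r (ℓ + 1))
    (h : ℕ → Fin n → ZMod q)
    (hgen : ∀ ℓ, 1 ≤ ℓ → ℓ ≤ a →
      dualCode q n (C ℓ : Set (Fin n → ZMod q))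
        = (Submodule.span (ZMod q) (h '' {j | 1 ≤ j ∧ j ≤ r ℓ}) : Set (Fin n → ZMod q)))
    (hclosed : ∀ m, 1 ≤ m → m < a →
      ∀ c ∈ dualCode q n (C m : Set (Fin n → ZMod q)),
      ∀ c' ∈ dualCode q n (C m : Set (Fin n → ZMod q)),
        zeroOne q n c c' ∈ dualCode q n (C (m + 1) : Set (Fin n → ZMod q)))
    (P : ℝ) (hP : 1 ≤ P) :
    lpDistR n P (dualLattice n
        ((fun v : Fin n → ℤ => fun i => (v i : ℝ)) '' lambdaDprime q a n r h))
      = sInf (insert (1 : ℝ)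
          {d : ℝ | ∃ ℓ ∈ Finset.Icc 1 a,
            d = ((q : ℝ) ^ (a - ℓ + 1))⁻¹
              * codeDistP q n P (dualCode q n (C ℓ : Set (Fin n → ZMod q)))}) := by
  classical
  haveI : NeZero q := ⟨by omega⟩
  have hP0 : P ≠ 0 := by positivity
  have hP0' : 0 < P := by positivity
  -- n > 0
  rcases Nat.eq_zero_or_pos n with hn0 | hn
  · exfalso
    apply hproper
    apply Submodule.eq_top_iff'.mpr
    intro x
    subst hn0
    have hx0 : x = 0 := funext (fun i => i.elim0)
    rw [hx0]
    exact (C 1).zero_mem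
  set i0 : Fin n := ⟨0, hn⟩ with hi0
  unfold lpDistR
  set S := ((fun v : Fin n → ℤ => fun i => (v i : ℝ)) '' lambdaDprime q a n r h) with hSdef
  set DL := dualLattice n S with hDL
  set LHSset := {d : ℝ | ∃ x ∈ DL, ∃ y ∈ DL, x ≠ y ∧
    d = (∑ i, |x i - y i| ^ P) ^ (1 / P)} with hLHSdef
  set RHSset := insert (1 : ℝ) {d : ℝ | ∃ ℓ ∈ Finset.Icc 1 a,
    d = ((q : ℝ) ^ (a - ℓ + 1))⁻¹
      * codeDistP q n P (dualCode q n (C ℓ : Set (Fin n → ZMod q)))} with hRHSdef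
  show sInf LHSset = sInf RHSset
  -- basic membership facts
  have hmem0 : (0 : Fin n → ℝ) ∈ DL := by
    intro x _
    exact ⟨0, by simp⟩
  have hmeme : (fun i => if i = i0 then (1 : ℝ) else 0) ∈ DL := by
    rintro x ⟨x0, _, rfl⟩
    refine ⟨x0 i0, ?_⟩
    rw [Finset.sum_eq_single i0]
    · simp
    · intro k _ hk
      simp [hk]
    · intro hk
      exact absurd (Finset.mem_univ i0) hk
  have h1mem : (1 : ℝ) ∈ LHSset := by
    refine ⟨(fun i => if i = i0 then (1 : ℝ) else 0), hmeme, 0, hmem0, ?_, ?_⟩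
    · intro heq
      have := congrFun heq i0
      simp at this
    · have hdist : ∀ i ∈ Finset.univ,
          |(if i = i0 then (1 : ℝ) else 0) - (0 : Fin n → ℝ) i| ^ P
            = if i = i0 then (1 : ℝ) else 0 := by
        intro i _
        by_cases hi : i = i0
        · simp [hi, Real.one_rpow]
        · simp [hi, Real.zero_rpow hP0]
      rw [Finset.sum_congr rfl hdist, Finset.sum_ite_eq' Finset.univ i0 (fun _ => (1 : ℝ))]
      simp [Real.one_rpow]
  have hLHSnn : ∀ d ∈ LHSset, 0 ≤ d := by
    rintro d ⟨x, _, y, _, _, rfl⟩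
    apply Real.rpow_nonneg
    apply Finset.sum_nonneg
    intro i _
    exact Real.rpow_nonneg (abs_nonneg _) P
  have hLHSbdd : BddBelow LHSset := ⟨0, hLHSnn⟩
  have hLHSne : LHSset.Nonempty := ⟨1, h1mem⟩
  have hRHSnn : ∀ b ∈ RHSset, 0 ≤ b := by
    intro b hb
    rcases Set.mem_insert_iff.mp hb with hb1 | ⟨ℓ, _, rfl⟩
    · rw [hb1]; norm_num
    · exact mul_nonneg (by positivity) (codeDistP_nonneg hP _)
  have hRHSbdd : BddBelow RHSset := ⟨0, hRHSnn⟩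
  have hRHSne : RHSset.Nonempty := ⟨1, Set.mem_insert _ _⟩
  apply le_antisymm
  · -- upper bound
    apply le_csInf hRHSne
    intro b hb
    rcases Set.mem_insert_iff.mp hb with hb1 | ⟨ℓ, hℓIcc, rfl⟩
    · rw [hb1]
      exact csInf_le hLHSbdd h1mem
    · rw [Finset.mem_Icc] at hℓIcc
      obtain ⟨hℓ1, hℓa⟩ := hℓIcc
      set t := a - ℓ + 1 with htdef
      set Sℓ := {d : ℝ | ∃ x ∈ dualCode q n (C ℓ : Set (Fin n → ZMod q)),
        ∃ y ∈ dualCode q n (C ℓ : Set (Fin n → ZMod q)), x ≠ y ∧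
        d = (∑ i, ((min ((x i - y i).val) (q - (x i - y i).val) : ℕ) : ℝ) ^ P) ^ (1 / P)}
        with hSℓdef
      have hcd : codeDistP q n P (dualCode q n (C ℓ : Set (Fin n → ZMod q))) = sInf Sℓ := rfl
      have hstep : ∀ d' ∈ Sℓ, sInf LHSset ≤ ((q : ℝ) ^ t)⁻¹ * d' := by
        rintro d' ⟨x, hx, y, hy, hxy, rfl⟩
        set c : Fin n → ZMod q := x - y with hcdef
        have hc : c ∈ dualCode q n (C ℓ : Set (Fin n → ZMod q)) := by
          rw [hcdef, sub_eq_add_neg]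
          exact dualCode_add hx (dualCode_neg hy)
        have hc0 : c ≠ 0 := sub_ne_zero.mpr hxy
        obtain ⟨vv, hvvM, hvv0, hvveq⟩ := witness_vector hq ha C r hr0 h hgen hclosed hP
          hℓ1 hℓa hc hc0
        apply csInf_le hLHSbdd
        refine ⟨vv, hvvM, 0, hmem0, hvv0, ?_⟩
        have hsz : ∀ i ∈ Finset.univ, |vv i - (0 : Fin n → ℝ) i| ^ P = |vv i| ^ P := by
          intro i _
          simp
        rw [Finset.sum_congr rfl hsz, hvveq]
        rfl
      have hSℓne : Sℓ.Nonempty := by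
        obtain ⟨c, hc, hc0⟩ := dual_nontrivial hq ha C hnested hproper ℓ hℓ1 hℓa
        exact ⟨_, ⟨c, hc, 0, dualCode_zero _, hc0, rfl⟩⟩
      have hqt : (0 : ℝ) < (q : ℝ) ^ t := by positivity
      have h2 : (q : ℝ) ^ t * sInf LHSset ≤ sInf Sℓ := by
        apply le_csInf hSℓne
        intro d' hd'
        have h3 := hstep d' hd'
        calc (q : ℝ) ^ t * sInf LHSset ≤ (q : ℝ) ^ t * (((q : ℝ) ^ t)⁻¹ * d') :=
              mul_le_mul_of_nonneg_left h3 (le_of_lt hqt)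
        _ = d' := by field_simp
      rw [hcd]
      calc sInf LHSset = ((q : ℝ) ^ t)⁻¹ * ((q : ℝ) ^ t * sInf LHSset) := by field_simp
      _ ≤ ((q : ℝ) ^ t)⁻¹ * sInf Sℓ := mul_le_mul_of_nonneg_left h2 (by positivity)
  · -- lower bound
    apply le_csInf hLHSne
    rintro d ⟨x, hx, y, hy, hxy, rfl⟩
    set vv : Fin n → ℝ := fun i => x i - y i with hvvdef
    have hvvM : vv ∈ DL := sub_mem_dualLattice hx hy
    have hvvne : ∃ idx, vv idx ≠ 0 := by
      by_contra hno
      push_neg at hno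
      apply hxy
      funext i
      have := hno i
      rw [hvvdef] at this
      simp only [] at this
      linarith [sub_eq_zero.mp this]
    obtain ⟨z, c, hcD, hrep⟩ := dual_sub_gam hq ha C r hr0 h hgen hclosed vv hvvM
    by_cases hall : ∀ k, k < a → c k = 0
    · -- vv is a nonzero integer vector, so its norm is at least 1
      have hvvz : ∀ idx, vv idx = (z idx : ℝ) := by
        intro idx
        rw [hrep idx]
        have hz : ∀ k ∈ Finset.range a, ((q : ℝ) ^ (k + 1))⁻¹ * ((c k idx).val : ℝ) = 0 := by
          intro k hk
          rw [Finset.mem_range] at hk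
          rw [hall k hk]
          simp [ZMod.val_zero]
        rw [Finset.sum_eq_zero hz, add_zero]
      obtain ⟨idx, hidx⟩ := hvvne
      have hz0 : z idx ≠ 0 := by
        intro h0
        apply hidx
        rw [hvvz idx, h0]
        simp
      have hz1 : (1 : ℝ) ≤ |vv idx| := by
        rw [hvvz idx, ← Int.cast_abs]
        exact_mod_cast Int.one_le_abs hz0
      have hsum1 : (1 : ℝ) ≤ ∑ i, |vv i| ^ P := by
        have hterm : (1 : ℝ) ≤ |vv idx| ^ P := by
          calc (1 : ℝ) = 1 ^ P := (Real.one_rpow P).symm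
          _ ≤ |vv idx| ^ P := Real.rpow_le_rpow (by norm_num) hz1 (le_of_lt hP0')
        calc (1 : ℝ) ≤ |vv idx| ^ P := hterm
        _ ≤ ∑ i, |vv i| ^ P :=
          Finset.single_le_sum (fun i _ => Real.rpow_nonneg (abs_nonneg _) P)
            (Finset.mem_univ idx)
      have hd1 : (1 : ℝ) ≤ (∑ i, |x i - y i| ^ P) ^ (1 / P) := by
        have hsame : ∀ i ∈ Finset.univ, |x i - y i| ^ P = |vv i| ^ P := fun i _ => rfl
        rw [Finset.sum_congr rfl hsame]
        calc (1 : ℝ) = 1 ^ (1 / P) := (Real.one_rpow _).symm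
        _ ≤ (∑ i, |vv i| ^ P) ^ (1 / P) :=
          Real.rpow_le_rpow (by norm_num) hsum1 (by positivity)
      calc sInf RHSset ≤ 1 := csInf_le hRHSbdd (Set.mem_insert _ _)
      _ ≤ _ := hd1
    · push_neg at hall
      obtain ⟨k0, hk0a, hk0⟩ := hall
      set F := (Finset.range a).filter (fun k => c k ≠ 0) with hF
      have hFne : F.Nonempty := by
        refine ⟨k0, ?_⟩
        rw [hF, Finset.mem_filter, Finset.mem_range]
        exact ⟨hk0a, hk0⟩
      set ks := F.max' hFne with hks
      have hksF : ks ∈ F := F.max'_mem hFne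
      have hksa : ks < a := by
        have := (Finset.mem_filter.mp hksF).1
        rwa [Finset.mem_range] at this
      have hcks : c ks ≠ 0 := (Finset.mem_filter.mp hksF).2
      have hmax : ∀ k, ks < k → k < a → c k = 0 := by
        intro k h1 h2
        by_contra hne
        have hkF : k ∈ F := by
          rw [hF, Finset.mem_filter, Finset.mem_range]
          exact ⟨h2, hne⟩
        have := F.le_max' k hkF
        omega
      set ℓ := a - ks with hℓ
      have hℓ1 : 1 ≤ ℓ := by omega
      have hℓa : ℓ ≤ a := by omega
      have htℓ : a - ℓ + 1 = ks + 1 := by omega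
      have hqt : (0 : ℝ) < (q : ℝ) ^ (ks + 1) := by positivity
      set mI : Fin n → ℤ := fun idx => (q : ℤ) ^ (ks + 1) * z idx +
        ∑ k ∈ Finset.range (ks + 1), (q : ℤ) ^ (ks + 1 - k - 1) * ((c k idx).val : ℤ) with hmI
      have hvvm : ∀ idx, (q : ℝ) ^ (ks + 1) * vv idx = (mI idx : ℝ) := by
        intro idx
        rw [hrep idx]
        have htrunc : ∑ k ∈ Finset.range a, ((q : ℝ) ^ (k + 1))⁻¹ * ((c k idx).val : ℝ)
            = ∑ k ∈ Finset.range (ks + 1), ((q : ℝ) ^ (k + 1))⁻¹ * ((c k idx).val : ℝ) := by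
          symm
          apply Finset.sum_subset (Finset.range_subset_range.mpr (by omega))
          intro k hk1 hk2
          rw [Finset.mem_range] at hk1
          rw [Finset.mem_range, not_lt] at hk2
          rw [hmax k (by omega) hk1]
          simp [ZMod.val_zero]
        rw [htrunc, hmI]
        push_cast
        rw [mul_add, Finset.mul_sum]
        congr 1
        apply Finset.sum_congr rfl
        intro k hk
        rw [Finset.mem_range] at hk
        have hqk : (q : ℝ) ^ (ks + 1) * ((q : ℝ) ^ (k + 1))⁻¹ = (q : ℝ) ^ (ks + 1 - k - 1) := by
          have h1 : (q : ℝ) ^ (ks + 1 - k - 1) * (q : ℝ) ^ (k + 1) = (q : ℝ) ^ (ks + 1) := by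
            rw [← pow_add]
            congr 1
            omega
          have h2 : ((q : ℝ) ^ (k + 1)) ≠ 0 := by positivity
          field_simp [← h1]
          rw [← h1]; ring
        calc (q : ℝ) ^ (ks + 1) * (((q : ℝ) ^ (k + 1))⁻¹ * ((c k idx).val : ℝ))
            = ((q : ℝ) ^ (ks + 1) * ((q : ℝ) ^ (k + 1))⁻¹) * ((c k idx).val : ℝ) := by ring
        _ = (q : ℝ) ^ (ks + 1 - k - 1) * ((c k idx).val : ℝ) := by rw [hqk]
      have hmod : ∀ idx, ((mI idx : ℤ) : ZMod q) = c ks idx := by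
        intro idx
        rw [hmI]
        push_cast
        rw [Finset.sum_range_succ, ZMod.natCast_self]
        rw [zero_pow (by omega : ks + 1 ≠ 0), zero_mul, zero_add]
        rw [show ks + 1 - ks - 1 = 0 from by omega, pow_zero, one_mul]
        rw [Finset.sum_eq_zero, zero_add]
        · exact self_natCast_val hq _
        · intro k hk
          rw [Finset.mem_range] at hk
          rw [zero_pow (by omega : ks + 1 - k - 1 ≠ 0), zero_mul]
      have habs : ∀ idx, ((min ((c ks idx).val) (q - (c ks idx).val) : ℕ) : ℝ)
          ≤ (q : ℝ) ^ (ks + 1) * |vv idx| := by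
        intro idx
        have hlee := lee_le_abs hq (c ks idx) (mI idx) (hmod idx)
        have h1 : (q : ℝ) ^ (ks + 1) * |vv idx| = |(mI idx : ℝ)| := by
          rw [← hvvm idx, abs_mul, abs_of_pos hqt]
        rw [h1, ← Int.cast_abs]
        exact_mod_cast hlee
      set b : ℝ := ((q : ℝ) ^ (ks + 1))⁻¹ with hb
      have hbpos : 0 < b := by rw [hb]; positivity
      have hterm : ∀ i ∈ Finset.univ,
          (b * ((min ((c ks i).val) (q - (c ks i).val) : ℕ) : ℝ)) ^ P ≤ |x i - y i| ^ P := by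
        intro i _
        apply Real.rpow_le_rpow (by positivity) ?_ (le_of_lt hP0')
        have h2 := habs i
        calc b * ((min ((c ks i).val) (q - (c ks i).val) : ℕ) : ℝ)
            ≤ b * ((q : ℝ) ^ (ks + 1) * |vv i|) :=
              mul_le_mul_of_nonneg_left h2 (le_of_lt hbpos)
        _ = |vv i| := by
              rw [hb]
              field_simp
        _ = |x i - y i| := rfl
      have hsum : ∑ i, (b * ((min ((c ks i).val) (q - (c ks i).val) : ℕ) : ℝ)) ^ P
          ≤ ∑ i, |x i - y i| ^ P := Finset.sum_le_sum hterm
      have houter : (∑ i, (b * ((min ((c ks i).val) (q - (c ks i).val) : ℕ) : ℝ)) ^ P) ^ (1 / P)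
          ≤ (∑ i, |x i - y i| ^ P) ^ (1 / P) := by
        apply Real.rpow_le_rpow ?_ hsum (by positivity)
        apply Finset.sum_nonneg
        intro i _
        apply Real.rpow_nonneg
        positivity
      rw [norm_scale hP (le_of_lt hbpos) _ (fun i => by positivity)] at houter
      have hcksD : c ks ∈ dualCode q n (C ℓ : Set (Fin n → ZMod q)) := hcD ks hksa
      have hmemS : (∑ i, ((min ((c ks i).val) (q - (c ks i).val) : ℕ) : ℝ) ^ P) ^ (1 / P)
          ∈ {d : ℝ | ∃ x ∈ dualCode q n (C ℓ : Set (Fin n → ZMod q)),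
            ∃ y ∈ dualCode q n (C ℓ : Set (Fin n → ZMod q)), x ≠ y ∧
            d = (∑ i, ((min ((x i - y i).val) (q - (x i - y i).val) : ℕ) : ℝ) ^ P) ^ (1 / P)} := by
        refine ⟨c ks, hcksD, 0, dualCode_zero _, hcks, ?_⟩
        congr 1
        apply Finset.sum_congr rfl
        intro i _
        have : c ks i - (0 : Fin n → ZMod q) i = c ks i := by simp
        rw [this]
      have hcdle : codeDistP q n P (dualCode q n (C ℓ : Set (Fin n → ZMod q)))
          ≤ (∑ i, ((min ((c ks i).val) (q - (c ks i).val) : ℕ) : ℝ) ^ P) ^ (1 / P) :=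
        csInf_le ⟨0, codeDistP_set_nonneg hP _⟩ hmemS
      have hfinal : b * codeDistP q n P (dualCode q n (C ℓ : Set (Fin n → ZMod q)))
          ≤ (∑ i, |x i - y i| ^ P) ^ (1 / P) :=
        le_trans (mul_le_mul_of_nonneg_left hcdle (le_of_lt hbpos)) houter
      have hmemR : b * codeDistP q n P (dualCode q n (C ℓ : Set (Fin n → ZMod q))) ∈ RHSset := by
        apply Set.mem_insert_of_mem
        refine ⟨ℓ, Finset.mem_Icc.mpr ⟨hℓ1, hℓa⟩, ?_⟩
        rw [htℓ]
      exact le_trans (csInf_le hRHSbdd hmemR) hfinal
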